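/- arXiv:2404.02080 — 4 statements merged into one kernel-verified Lean document; each statement's English description precedes it below -/
import Mathlib

section
/- The map (x,p) ↦ u(x,p) from ℝⁿ × ℝⁿ to ℝᵐ, where u(x,p) is the unique minimizer over ω ∈ ℝᵐ of L(x,ω) + p·f(x,ω), is well defined and continuously differentiable on ℝⁿ × ℝⁿ. -/
open scoped InnerProductSpace
open Filter Topology

noncomputable section
set_option maxHeartbeats 1000000

abbrev E (k : ℕ) : Type := EuclideanSpace ℝ (Fin k)

section Aux

variable {X : Type*} [NormedAddCommGroup X] [NormedSpace ℝ X]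

lemma line_hasDerivAt (x v : X) (t : ℝ) :
    HasDerivAt (fun s : ℝ => x + s • v) v t := by
  simpa using ((hasDerivAt_id t).smul_const v).const_add x

lemma lineDeriv1 {h : X → ℝ} (hh : Differentiable ℝ h) (x v : X) (t : ℝ) :
    HasDerivAt (fun s : ℝ => h (x + s • v)) (fderiv ℝ h (x + t • v) v) t :=
  (hh (x + t • v)).hasFDerivAt.comp_hasDerivAt t (line_hasDerivAt x v t)

lemma lineDeriv2 {h : X → ℝ} (hh : ContDiff ℝ 2 h) (x v : X) (t : ℝ) :
    HasDerivAt (fun s : ℝ => fderiv ℝ h (x + s • v) v)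
      (fderiv ℝ (fderiv ℝ h) (x + t • v) v v) t := by
  have hd1 : ContDiff ℝ 1 (fderiv ℝ h) := hh.fderiv_right (by norm_num)
  have hF : HasFDerivAt (fderiv ℝ h) (fderiv ℝ (fderiv ℝ h) (x + t • v)) (x + t • v) :=
    (hd1.differentiable (by norm_num) _).hasFDerivAt
  have := ((ContinuousLinearMap.apply ℝ ℝ v).hasFDerivAt.comp (x + t • v) hF).comp_hasDerivAt t
      (line_hasDerivAt x v t)
  exact this

lemma taylor_lower {h : X → ℝ} (hh : ContDiff ℝ 2 h) {δ : ℝ}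
    (hconv : ∀ u c, δ * ‖c‖ ^ 2 ≤ fderiv ℝ (fderiv ℝ h) u c c) (a b : X) :
    h a + fderiv ℝ h a (b - a) + δ / 2 * ‖b - a‖ ^ 2 ≤ h b := by
  set c := b - a with hc
  have hdiff : Differentiable ℝ h := hh.differentiable (by norm_num)
  set φ' : ℝ → ℝ := fun t => fderiv ℝ h (a + t • c) c with hφ'
  have hφ'deriv : ∀ t, HasDerivAt φ' (fderiv ℝ (fderiv ℝ h) (a + t • c) c c) t :=
    fun t => lineDeriv2 hh a c t
  set ψ' : ℝ → ℝ := fun t => φ' t - φ' 0 - δ * ‖c‖ ^ 2 * t with hψ'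
  have hψ'deriv : ∀ t, HasDerivAt ψ' (fderiv ℝ (fderiv ℝ h) (a + t • c) c c - δ * ‖c‖ ^ 2) t := by
    intro t
    have h1 := (hφ'deriv t).sub_const (φ' 0)
    have h2 : HasDerivAt (fun t : ℝ => δ * ‖c‖ ^ 2 * t) (δ * ‖c‖ ^ 2) t := by
      simpa using (hasDerivAt_id t).const_mul (δ * ‖c‖ ^ 2)
    exact h1.sub h2
  have hψ'mono : Monotone ψ' := by
    apply monotone_of_deriv_nonneg (fun t => (hψ'deriv t).differentiableAt)
    intro t
    rw [(hψ'deriv t).deriv]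
    have := hconv (a + t • c) c
    linarith
  have hψ'nonneg : ∀ t ≥ (0:ℝ), 0 ≤ ψ' t := by
    intro t ht
    have h0 : ψ' 0 = 0 := by simp [hψ']
    calc (0:ℝ) = ψ' 0 := h0.symm
    _ ≤ ψ' t := hψ'mono ht
  set ψ : ℝ → ℝ := fun t => h (a + t • c) - φ' 0 * t - δ / 2 * ‖c‖ ^ 2 * t ^ 2 with hψ
  have hψderiv : ∀ t, HasDerivAt ψ (ψ' t) t := by
    intro t
    have h1 := lineDeriv1 hdiff a c t
    have h2 : HasDerivAt (fun t : ℝ => φ' 0 * t) (φ' 0) t := by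
      simpa using (hasDerivAt_id t).const_mul (φ' 0)
    have h3 : HasDerivAt (fun t : ℝ => δ / 2 * ‖c‖ ^ 2 * t ^ 2) (δ / 2 * ‖c‖ ^ 2 * (2 * t)) t := by
      have := (hasDerivAt_pow 2 t).const_mul (δ / 2 * ‖c‖ ^ 2)
      simpa [mul_assoc] using this
    have h4 := (h1.sub h2).sub h3
    refine h4.congr_deriv ?_
    simp only [hψ', hφ']
    ring
  have hmono : MonotoneOn ψ (Set.Ici (0:ℝ)) := by
    apply monotoneOn_of_deriv_nonneg (convex_Ici 0)
      (fun t _ => (hψderiv t).differentiableAt.continuousAt.continuousWithinAt)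
      (fun t _ => (hψderiv t).differentiableAt.differentiableWithinAt)
    intro t ht
    rw [interior_Ici] at ht
    rw [(hψderiv t).deriv]
    exact hψ'nonneg t (le_of_lt ht)
  have h01 := hmono Set.self_mem_Ici (by norm_num : (1:ℝ) ∈ Set.Ici (0:ℝ)) zero_le_one
  have e0 : ψ 0 = h a := by simp [hψ]
  have e1 : ψ 1 = h b - φ' 0 - δ / 2 * ‖c‖ ^ 2 := by
    simp [hψ, hc]
  have eφ : φ' 0 = fderiv ℝ h a (b - a) := by simp only [hφ', zero_smul, add_zero, hc]
  rw [e0, e1] at h01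
  linarith

end Aux

/-- The map `(x, p) ↦ u(x, p)`, where `u(x, p)` is the unique minimizer over
`ω ∈ ℝᵐ` of `L x ω + ⟪p, f x ω⟫`, is well defined and continuously
differentiable on `ℝⁿ × ℝⁿ`. -/
theorem minimizer_map_contDiff
    (n m : ℕ) (hn : 1 ≤ n) (hm : 1 ≤ m)
    (f0 : E n → E n) (fi : Fin m → E n → E n)
    (hf0 : ContDiff ℝ 2 f0) (hfi : ∀ i, ContDiff ℝ 2 (fi i))
    (f : E n → E m → E n)
    (hf : ∀ x u, f x u = f0 x + ∑ i, u i • fi i x)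
    (L : E n → E m → ℝ)
    (hL : ContDiff ℝ 2 (fun q : E n × E m => L q.1 q.2))
    (δL : ℝ) (hδL : 0 < δL)
    (hconv : ∀ x u, ∀ c : E m,
      δL * ‖c‖ ^ 2 ≤ iteratedFDeriv ℝ 2 (fun ω => L x ω) u ![c, c]) :
    ∃ ustar : E n × E n → E m,
      ContDiff ℝ 1 ustar ∧
      ∀ x p : E n,
        (∀ ω : E m, L x (ustar (x, p)) + ⟪p, f x (ustar (x, p))⟫_ℝ
            ≤ L x ω + ⟪p, f x ω⟫_ℝ) ∧
        (∀ ω₀ : E m,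
          (∀ ω : E m, L x ω₀ + ⟪p, f x ω₀⟫_ℝ ≤ L x ω + ⟪p, f x ω⟫_ℝ) →
            ω₀ = ustar (x, p)) := by
  classical
  set Φ : (E n × E n) → E m → ℝ := fun z ω => L z.1 ω + ⟪z.2, f z.1 ω⟫_ℝ with hΦdef
  set Ψ : ((E n × E n) × E m) → ℝ := fun q => Φ q.1 q.2 with hΨdef
  have hΨΦ : ∀ z ω, Ψ (z, ω) = Φ z ω := fun z ω => rfl
  have hΦeq : ∀ (x p : E n) ω, Φ (x, p) ω = L x ω + ⟪p, f x ω⟫_ℝ := fun _ _ _ => rfl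
  clear_value Φ Ψ
  have hΨc : ContDiff ℝ 2 Ψ := by
    have hrw : Ψ = fun q : (E n × E n) × E m =>
        L q.1.1 q.2 + (⟪q.1.2, f0 q.1.1⟫_ℝ + ∑ i, q.2 i * ⟪q.1.2, fi i q.1.1⟫_ℝ) := by
      funext q
      simp only [hΨdef, hΦdef, hf, inner_add_right, inner_sum, real_inner_smul_right]
    rw [hrw]
    apply ContDiff.add
    · exact hL.comp ((contDiff_fst.fst).prodMk contDiff_snd)
    apply ContDiff.add
    · exact ContDiff.inner ℝ (contDiff_fst.snd) (hf0.comp contDiff_fst.fst)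
    · refine ContDiff.sum fun i _ => ContDiff.mul ?_ ?_
      · exact ((EuclideanSpace.proj i : E m →L[ℝ] ℝ).contDiff).comp contDiff_snd
      · exact ContDiff.inner ℝ (contDiff_fst.snd) ((hfi i).comp contDiff_fst.fst)
  have hΦc : ∀ z, ContDiff ℝ 2 (fun ω => Φ z ω) := by
    intro z
    have h1 : (fun ω => Φ z ω) = fun ω => Ψ (z, ω) := funext fun ω => (hΨΦ z ω).symm
    rw [h1]
    exact hΨc.comp (contDiff_const.prodMk contDiff_id)
  -- Hessian bound
  have hHess : ∀ z ω (c : E m), δL * ‖c‖ ^ 2 ≤ fderiv ℝ (fderiv ℝ (fun ω => Φ z ω)) ω c c := by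
    rintro ⟨x, p⟩ ω c
    set ℓ : E m →L[ℝ] ℝ := ∑ i, (⟪p, fi i x⟫_ℝ) • (EuclideanSpace.proj i : E m →L[ℝ] ℝ) with hℓ
    have hLx : ContDiff ℝ 2 (fun ω => L x ω) := hL.comp (contDiff_const.prodMk contDiff_id)
    have hrw : (fun ω => Φ (x, p) ω) = fun ω => L x ω + (⟪p, f0 x⟫_ℝ + ℓ ω) := by
      funext ω
      simp only [hΦdef, hf, inner_add_right, inner_sum, real_inner_smul_right, hℓ,
        ContinuousLinearMap.sum_apply, ContinuousLinearMap.coe_smul', Pi.smul_apply,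
        smul_eq_mul]
      congr 2
      refine Finset.sum_congr rfl fun j _ => ?_
      have : (EuclideanSpace.proj j : E m →L[ℝ] ℝ) ω = ω j := rfl
      rw [this]
      ring
    have hstep1 : (fderiv ℝ (fun ω => Φ (x, p) ω)) = fun ω => fderiv ℝ (fun ω' => L x ω') ω + ℓ := by
      funext ω
      rw [hrw]
      exact (((hLx.differentiable (by norm_num) ω).hasFDerivAt).add
        ((ℓ.hasFDerivAt).const_add _)).fderiv
    have hstep2 : fderiv ℝ (fderiv ℝ (fun ω => Φ (x, p) ω)) ω
        = fderiv ℝ (fderiv ℝ (fun ω' => L x ω')) ω := by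
      rw [hstep1]
      exact fderiv_add_const ℓ
    rw [hstep2]
    have h := hconv x ω c
    rw [iteratedFDeriv_two_apply] at h
    simpa using h
  have key : ∀ z (a b : E m),
      Φ z a + fderiv ℝ (fun ω => Φ z ω) a (b - a) + δL / 2 * ‖b - a‖ ^ 2 ≤ Φ z b :=
    fun z a b => taylor_lower (hΦc z) (fun u c => hHess z u c) a b
  have hcrit_min : ∀ z u, fderiv ℝ (fun ω => Φ z ω) u = 0 → ∀ ω, Φ z u ≤ Φ z ω := by
    intro z u hcrit ω
    have h := key z u ω
    rw [hcrit] at h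
    simp only [ContinuousLinearMap.zero_apply, add_zero] at h
    have h2 : 0 ≤ δL / 2 * ‖ω - u‖ ^ 2 := by positivity
    exact le_trans (le_add_of_nonneg_right h2) h
  have hmin_crit : ∀ z u, (∀ ω, Φ z u ≤ Φ z ω) → fderiv ℝ (fun ω => Φ z ω) u = 0 := by
    intro z u hmin
    exact IsLocalMin.fderiv_eq_zero (Filter.Eventually.of_forall hmin)
  have huniq_crit : ∀ z u₁ u₂, fderiv ℝ (fun ω => Φ z ω) u₁ = 0 →
      fderiv ℝ (fun ω => Φ z ω) u₂ = 0 → u₁ = u₂ := by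
    intro z u₁ u₂ h1 h2
    have k1 := key z u₁ u₂
    have k2 := key z u₂ u₁
    rw [h1] at k1
    rw [h2] at k2
    simp only [ContinuousLinearMap.zero_apply, add_zero] at k1 k2
    have hn' : ‖u₁ - u₂‖ = ‖u₂ - u₁‖ := norm_sub_rev _ _
    have hsq : ‖u₂ - u₁‖ ^ 2 = 0 := by nlinarith [sq_nonneg ‖u₂ - u₁‖]
    exact (sub_eq_zero.mp (norm_eq_zero.mp (sq_eq_zero_iff.mp hsq))).symm
  -- existence of a minimizer
  have hex : ∀ z, ∃ u : E m, ∀ ω, Φ z u ≤ Φ z ω := by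
    intro z
    set M := ‖fderiv ℝ (fun ω => Φ z ω) 0‖ with hM
    set R := 2 * M / δL + 1 with hR
    have hM0 : 0 ≤ M := norm_nonneg _
    have hR0 : 0 < R := by positivity
    obtain ⟨u, huball, humin⟩ := (isCompact_closedBall (0 : E m) R).exists_isMinOn
      (Metric.nonempty_closedBall.mpr hR0.le)
      ((hΦc z).continuous.continuousOn)
    refine ⟨u, fun ω => ?_⟩
    by_cases hω : ω ∈ Metric.closedBall (0 : E m) R
    · exact humin hω
    · have h1 : Φ z u ≤ Φ z 0 := humin (Metric.mem_closedBall_self hR0.le)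
      have h2 := key z 0 ω
      have hb : ‖fderiv ℝ (fun ω => Φ z ω) 0 ω‖ ≤ M * ‖ω‖ := by
        simpa using (fderiv ℝ (fun ω => Φ z ω) 0).le_opNorm ω
      rw [sub_zero] at h2
      have hb' : -(M * ‖ω‖) ≤ fderiv ℝ (fun ω => Φ z ω) 0 ω := by
        have habs := abs_le.mp (by rwa [Real.norm_eq_abs] at hb)
        linarith [habs.1]
      have hωR : R < ‖ω‖ := by
        simp only [Metric.mem_closedBall, dist_zero_right, not_le] at hω
        exact hω
      have hMR : δL * R = 2 * M + δL := by
        rw [hR, mul_add, mul_div_cancel₀ _ hδL.ne', mul_one]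
      have h5 : 2 * M + δL ≤ δL * ‖ω‖ := by
        nlinarith [mul_nonneg (sub_nonneg.mpr hωR.le) hδL.le]
      have hstep : M * ‖ω‖ ≤ δL / 2 * ‖ω‖ ^ 2 := by
        nlinarith [mul_nonneg (norm_nonneg ω) (by linarith : (0:ℝ) ≤ δL * ‖ω‖ - 2 * M)]
      have h6 : (0:ℝ) ≤ fderiv ℝ (fun ω => Φ z ω) 0 ω + δL / 2 * ‖ω‖ ^ 2 := by
        linarith
      rw [add_assoc] at h2
      exact le_trans h1 (le_trans (le_add_of_nonneg_right h6) h2)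
  choose ustar hustar using hex
  have hcrit : ∀ z, fderiv ℝ (fun ω => Φ z ω) (ustar z) = 0 :=
    fun z => hmin_crit z _ (hustar z)
  have huniq : ∀ z u, (∀ ω, Φ z u ≤ Φ z ω) → u = ustar z :=
    fun z u hu => huniq_crit z u (ustar z) (hmin_crit z u hu) (hcrit z)
  -- the gradient map
  set e : OrthonormalBasis (Fin m) ℝ (E m) := EuclideanSpace.basisFun (Fin m) ℝ with he
  set g : ((E n × E n) × E m) → E m := fun q =>
    ∑ i, (fderiv ℝ Ψ q ((0 : E n × E n), e i)) • e i with hgdef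
  have hD : ContDiff ℝ 1 (fderiv ℝ Ψ) := hΨc.fderiv_right (by norm_num)
  have hgc : ContDiff ℝ 1 g := by
    apply ContDiff.sum
    intro i _
    exact (((ContinuousLinearMap.apply ℝ ℝ ((0 : E n × E n), e i)).contDiff).comp hD).smul
      contDiff_const
  have hDpartial : ∀ z ω (c : E m), fderiv ℝ Ψ (z, ω) ((0 : E n × E n), c)
      = fderiv ℝ (fun ω => Φ z ω) ω c := by
    intro z ω c
    have hcomp0 : HasFDerivAt (Ψ ∘ fun ω' => ((z, ω') : (E n × E n) × E m))
        ((fderiv ℝ Ψ (z, ω)).comp (ContinuousLinearMap.inr ℝ (E n × E n) (E m))) ω :=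
      ((hΨc.differentiable (by norm_num) (z, ω)).hasFDerivAt).comp ω
        (hasFDerivAt_prodMk_right z ω)
    have hcomp : HasFDerivAt (fun ω' => Φ z ω')
        ((fderiv ℝ Ψ (z, ω)).comp (ContinuousLinearMap.inr ℝ (E n × E n) (E m))) ω := by
      have h1 : (Ψ ∘ fun ω' => ((z, ω') : (E n × E n) × E m)) = fun ω' => Φ z ω' :=
        funext fun ω' => hΨΦ z ω'
      rwa [h1] at hcomp0
    rw [hcomp.fderiv]
    simp
  have hg_inner : ∀ z ω (c : E m), ⟪g (z, ω), c⟫_ℝ = fderiv ℝ (fun ω => Φ z ω) ω c := by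
    intro z ω c
    rw [← hDpartial]
    have hsum : ((0 : E n × E n), c) = ∑ i, c i • ((0 : E n × E n), e i) := by
      apply Prod.ext
      · rw [Prod.fst_sum]
        simp
      · rw [Prod.snd_sum]
        have h2 : ∑ i, c i • e i = c := by
          rw [he]
          have h3 := (EuclideanSpace.basisFun (Fin m) ℝ).sum_repr c
          simpa [EuclideanSpace.basisFun_repr] using h3
        simpa using h2.symm
    rw [hsum, map_sum, hgdef]
    rw [sum_inner]
    refine Finset.sum_congr rfl fun i _ => ?_
    rw [real_inner_smul_left, map_smul]
    simp only [he, EuclideanSpace.basisFun_apply, EuclideanSpace.inner_single_left, map_one,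
      one_mul, smul_eq_mul]
    ring
  have hg_zero : ∀ z ω, fderiv ℝ (fun ω => Φ z ω) ω = 0 → g (z, ω) = 0 := by
    intro z ω h
    have h2 : ⟪g (z, ω), g (z, ω)⟫_ℝ = 0 := by
      rw [hg_inner, h]
      simp
    exact inner_self_eq_zero.mp h2
  have hg_zero' : ∀ z ω, g (z, ω) = 0 → fderiv ℝ (fun ω => Φ z ω) ω = 0 := by
    intro z ω h
    ext c
    rw [← hg_inner, h]
    simp
  -- smoothness of ustar
  have hsmooth : ContDiff ℝ 1 ustar := by
    rw [contDiff_iff_contDiffAt]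
    intro z₀
    set a : (E n × E n) × E m := (z₀, ustar z₀) with ha
    set Dg : ((E n × E n) × E m) →L[ℝ] E m := fderiv ℝ g a with hDg
    have hgq : HasFDerivAt g Dg a := (hgc.differentiable (by norm_num) a).hasFDerivAt
    have hDgpos : ∀ c : E m, δL * ‖c‖ ^ 2 ≤ ⟪Dg ((0 : E n × E n), c), c⟫_ℝ := by
      intro c
      have hline : HasDerivAt (fun t : ℝ => ((z₀, ustar z₀ + t • c) : (E n × E n) × E m))
          (((0 : E n × E n), c)) 0 :=
        (hasDerivAt_const (0:ℝ) z₀).prodMk (line_hasDerivAt (ustar z₀) c 0)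
      have hgq' : HasFDerivAt g Dg (z₀, ustar z₀ + (0:ℝ) • c) := by
        simpa [ha] using hgq
      have h1 : HasDerivAt (fun t : ℝ => g (z₀, ustar z₀ + t • c)) (Dg ((0 : E n × E n), c)) 0 :=
        by have := hgq'.comp_hasDerivAt 0 hline; exact this
      have h2 : HasDerivAt (fun t : ℝ => ⟪g (z₀, ustar z₀ + t • c), c⟫_ℝ)
          (⟪Dg ((0 : E n × E n), c), c⟫_ℝ) 0 := by
        have := HasDerivAt.inner ℝ h1 (hasDerivAt_const 0 c)
        simpa using this
      have h3 : (fun t : ℝ => ⟪g (z₀, ustar z₀ + t • c), c⟫_ℝ)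
          = fun t : ℝ => fderiv ℝ (fun ω => Φ z₀ ω) (ustar z₀ + t • c) c := by
        funext t
        exact hg_inner z₀ _ c
      rw [h3] at h2
      have h4 : HasDerivAt (fun t : ℝ => fderiv ℝ (fun ω => Φ z₀ ω) (ustar z₀ + t • c) c)
          (fderiv ℝ (fderiv ℝ (fun ω => Φ z₀ ω)) (ustar z₀) c c) 0 := by
        have := lineDeriv2 (hΦc z₀) (ustar z₀) c 0
        simpa using this
      have h5 := h2.unique h4
      rw [h5]
      exact hHess z₀ (ustar z₀) c
    set F' : ((E n × E n) × E m) →L[ℝ] ((E n × E n) × E m) :=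
      (ContinuousLinearMap.fst ℝ (E n × E n) (E m)).prod Dg with hF'def
    have hker0 : ∀ q, F' q = 0 → q = 0 := by
      rintro ⟨dz, dω⟩ hq
      rw [Prod.ext_iff] at hq
      simp only [hF'def, ContinuousLinearMap.prod_apply, ContinuousLinearMap.coe_fst',
        Prod.fst_zero, Prod.snd_zero] at hq
      obtain ⟨hz, hw⟩ := hq
      subst hz
      have h1 := hDgpos dω
      rw [hw] at h1
      simp only [inner_zero_left] at h1
      have hsq : ‖dω‖ ^ 2 = 0 := by nlinarith [sq_nonneg ‖dω‖]
      have hdω : dω = 0 := norm_eq_zero.mp (sq_eq_zero_iff.mp hsq)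
      simp [hdω]
    have hinj : Function.Injective F' := by
      intro q₁ q₂ h
      have := hker0 (q₁ - q₂) (by rw [map_sub, h, sub_self])
      exact sub_eq_zero.mp this
    have hker : LinearMap.ker (F' : ((E n × E n) × E m) →ₗ[ℝ] ((E n × E n) × E m)) = ⊥ := LinearMap.ker_eq_bot.mpr hinj
    have hsurj : LinearMap.range (F' : ((E n × E n) × E m) →ₗ[ℝ] ((E n × E n) × E m)) = ⊤ :=
      LinearMap.range_eq_top.mpr (LinearMap.injective_iff_surjective.mp hinj)
    set e' : ((E n × E n) × E m) ≃L[ℝ] ((E n × E n) × E m) :=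
      ContinuousLinearEquiv.ofBijective F' hker hsurj with he'
    have hcoe : (e' : ((E n × E n) × E m) →L[ℝ] ((E n × E n) × E m)) = F' :=
      ContinuousLinearEquiv.coe_ofBijective _ _ _
    set Fm : ((E n × E n) × E m) → ((E n × E n) × E m) := fun q => (q.1, g q) with hFm
    have hFmc : ContDiff ℝ 1 Fm := contDiff_fst.prodMk hgc
    have hFd : HasFDerivAt Fm (e' : ((E n × E n) × E m) →L[ℝ] ((E n × E n) × E m)) a := by
      rw [hcoe]
      exact (hasFDerivAt_fst).prodMk hgq
    have hFa : ContDiffAt ℝ 1 Fm a := hFmc.contDiffAt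
    have hFa0 : Fm a = (z₀, 0) := by
      simp only [hFm, ha]
      exact Prod.ext rfl (hg_zero z₀ (ustar z₀) (hcrit z₀))
    set u := hFa.localInverse hFd (by norm_num) with hu
    have hu_cd : ContDiffAt ℝ 1 u (Fm a) := hFa.to_localInverse hFd (by norm_num)
    have hright : ∀ᶠ y in 𝓝 (Fm a), Fm (u y) = y :=
      (hFa.hasStrictFDerivAt' hFd (by norm_num)).eventually_right_inverse
    have hj : Tendsto (fun z : E n × E n => ((z, (0 : E m)) : (E n × E n) × E m))
        (𝓝 z₀) (𝓝 (Fm a)) := by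
      rw [hFa0]
      exact (continuous_id.prodMk continuous_const).tendsto z₀
    have hev : ∀ᶠ z in 𝓝 z₀, Fm (u (z, 0)) = (z, 0) := hj.eventually hright
    have hequ : ∀ᶠ z in 𝓝 z₀, ustar z = (u (z, 0)).2 := by
      filter_upwards [hev] with z hz
      have h1 : (u (z, 0)).1 = z := congrArg Prod.fst hz
      have h2 : g (u (z, 0)) = 0 := congrArg Prod.snd hz
      have h4 : ((z, (u (z, 0)).2) : (E n × E n) × E m) = u (z, 0) :=
        Prod.ext h1.symm rfl
      have h3 : g (z, (u (z, 0)).2) = 0 := by rw [h4]; exact h2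
      exact (huniq z _ (hcrit_min z _ (hg_zero' z _ h3))).symm
    have hucomp : ContDiffAt ℝ 1 (fun z : E n × E n => u (z, 0)) z₀ := by
      rw [hFa0] at hu_cd
      exact hu_cd.comp z₀ (contDiffAt_id.prodMk contDiffAt_const)
    have h6 : ContDiffAt ℝ 1 (fun z : E n × E n => (u (z, 0)).2) z₀ :=
      (contDiffAt_snd).comp z₀ hucomp
    exact h6.congr_of_eventuallyEq hequ
  refine ⟨ustar, hsmooth, fun x p => ⟨fun ω => ?_, fun ω₀ h => ?_⟩⟩
  · have h1 := hustar (x, p) ω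
    rwa [hΦeq, hΦeq] at h1
  · exact huniq (x, p) ω₀ (fun ω => by rw [hΦeq, hΦeq]; exact h ω)
end
end

section
/- For every t ∈ [0,T], every z ∈ U and every v ∈ ℝⁿ, one has the identity d/dt [ p(t,z) · (x_z(t,z) v) ] = −( L_x(x(t,z),u(t,z)) · (x_z(t,z)v) + L_u(x(t,z),u(t,z)) · (u_z(t,z)v) ); in particular, if z ↦ L(x(t,z),u(t,z)) is differentiable with z-gradient Γ_z(t,z), then d/dt [ p(t,z) · x_z(t,z) v ] = −Γ_z(t,z)·v. -/
open scoped InnerProductSpace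

noncomputable section

/-- Along solutions of the adjoint equation, with `xz(t,z)` solving the
variational equation and the stationarity condition in force, one has
`d/dt [ p(t,z) · (xz(t,z) v) ] = −( L_x · (xz v) + L_u · (uz v) )`;
in particular, if `z ↦ L(x(t,z), u(t,z))` has `z`-differential `Γz`, then this
derivative equals `−Γz v`. -/
theorem deriv_p_dot_xz
    (n m : ℕ) (hn : 1 ≤ n) (hm : 1 ≤ m) (T : ℝ) (hT : 0 < T)
    (f0 : E n → E n) (fi : Fin m → E n → E n)
    (hf0 : ContDiff ℝ 1 f0) (hfi : ∀ i, ContDiff ℝ 1 (fi i))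
    (f : E n → E m → E n)
    (hf : ∀ y ω, f y ω = f0 y + ∑ i, ω i • fi i y)
    (L : E n → E m → ℝ)
    (hL : ContDiff ℝ 1 (fun q : E n × E m => L q.1 q.2))
    (U : Set (E n)) (hU : IsOpen U)
    (x p p' : ℝ → E n → E n) (u : ℝ → E n → E m)
    (xz : ℝ → E n → (E n →L[ℝ] E n)) (uz : ℝ → E n → (E n →L[ℝ] E m))
    (hxcont : Continuous fun q : ℝ × E n => x q.1 q.2)
    (hpcont : Continuous fun q : ℝ × E n => p q.1 q.2)
    (hucont : Continuous fun q : ℝ × E n => u q.1 q.2)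
    -- `xz` and `uz` are the `z`-Jacobians of `x` and `u`
    (hxz : ∀ t : ℝ, ∀ z ∈ U, HasFDerivAt (x t) (xz t z) z)
    (huz : ∀ t : ℝ, ∀ z ∈ U, HasFDerivAt (u t) (uz t z) z)
    -- (i) the adjoint equation `ṗ = −p·f_x − L_x`
    (hpode : ∀ z ∈ U, ∀ t ∈ Set.Icc (0 : ℝ) T, HasDerivAt (fun s => p s z) (p' t z) t)
    (hpeq : ∀ z ∈ U, ∀ t ∈ Set.Icc (0 : ℝ) T, ∀ h : E n,
        ⟪p' t z, h⟫_ℝ =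
          -⟪p t z, fderiv ℝ (fun y => f y (u t z)) (x t z) h⟫_ℝ
          - fderiv ℝ (fun y => L y (u t z)) (x t z) h)
    -- (ii) the variational equation `d/dt x_z = f_x x_z + f_u u_z`
    (hvar : ∀ z ∈ U, ∀ t ∈ Set.Icc (0 : ℝ) T,
        HasDerivAt (fun s => xz s z)
          ((fderiv ℝ (fun y => f y (u t z)) (x t z)).comp (xz t z)
            + (fderiv ℝ (fun ω => f (x t z) ω) (u t z)).comp (uz t z)) t)
    -- (iii) the stationarity condition `p·f_u + L_u = 0`
    (hstat : ∀ z ∈ U, ∀ t ∈ Set.Icc (0 : ℝ) T, ∀ ω : E m,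
        ⟪p t z, fderiv ℝ (fun ω' => f (x t z) ω') (u t z) ω⟫_ℝ
          + fderiv ℝ (fun ω' => L (x t z) ω') (u t z) ω = 0) :
    ∀ t ∈ Set.Icc (0 : ℝ) T, ∀ z ∈ U, ∀ v : E n,
      HasDerivAt (fun s => ⟪p s z, xz s z v⟫_ℝ)
        (-(fderiv ℝ (fun y => L y (u t z)) (x t z) (xz t z v)
            + fderiv ℝ (fun ω' => L (x t z) ω') (u t z) (uz t z v))) t
      ∧ ∀ Γz : E n →L[ℝ] ℝ,
          HasFDerivAt (fun w => L (x t w) (u t w)) Γz z →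
          HasDerivAt (fun s => ⟪p s z, xz s z v⟫_ℝ) (-(Γz v)) t := by

  intro t ht z hz v
  -- derivative of s ↦ xz s z v
  have hXv : HasDerivAt (fun s => xz s z v)
      ((fderiv ℝ (fun y => f y (u t z)) (x t z)) (xz t z v)
        + (fderiv ℝ (fun ω => f (x t z) ω) (u t z)) (uz t z v)) t := by
    have := (hvar z hz t ht).clm_apply (hasDerivAt_const t v)
    simpa using this
  have hp := hpode z hz t ht
  have hmain : HasDerivAt (fun s => ⟪p s z, xz s z v⟫_ℝ)
      (-(fderiv ℝ (fun y => L y (u t z)) (x t z) (xz t z v)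
          + fderiv ℝ (fun ω' => L (x t z) ω') (u t z) (uz t z v))) t := by
    have h := hp.inner (𝕜 := ℝ) hXv
    have heq : ⟪p t z, (fderiv ℝ (fun y => f y (u t z)) (x t z)) (xz t z v)
          + (fderiv ℝ (fun ω => f (x t z) ω) (u t z)) (uz t z v)⟫_ℝ
          + ⟪p' t z, xz t z v⟫_ℝ
        = -(fderiv ℝ (fun y => L y (u t z)) (x t z) (xz t z v)
          + fderiv ℝ (fun ω' => L (x t z) ω') (u t z) (uz t z v)) := by
      have h1 := hpeq z hz t ht (xz t z v)
      have h2 := hstat z hz t ht (uz t z v)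
      rw [inner_add_right]
      linarith
    rwa [heq] at h
  refine ⟨hmain, ?_⟩
  intro Γz hΓ
  -- identify Γz v with the sum of partial derivatives
  set D2 := fderiv ℝ (fun q : E n × E m => L q.1 q.2) (x t z, u t z) with hD2def
  have hD2 : HasFDerivAt (fun q : E n × E m => L q.1 q.2) D2 (x t z, u t z) :=
    ((hL.differentiable one_ne_zero) (x t z, u t z)).hasFDerivAt
  have hcomp : HasFDerivAt (fun w => L (x t w) (u t w))
      (D2.comp ((xz t z).prod (uz t z))) z :=
    HasFDerivAt.comp (f := fun w => (x t w, u t w)) z hD2 ((hxz t z hz).prodMk (huz t z hz))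
  have hΓeq : Γz = D2.comp ((xz t z).prod (uz t z)) := hΓ.unique hcomp
  have hpart1 : fderiv ℝ (fun y => L y (u t z)) (x t z)
      = D2.comp (ContinuousLinearMap.inl ℝ (E n) (E m)) :=
    (HasFDerivAt.comp (f := fun y => (y, u t z)) (x t z) hD2 (hasFDerivAt_prodMk_left (x t z) (u t z))).fderiv
  have hpart2 : fderiv ℝ (fun ω' => L (x t z) ω') (u t z)
      = D2.comp (ContinuousLinearMap.inr ℝ (E n) (E m)) :=
    (HasFDerivAt.comp (f := fun ω => (x t z, ω)) (u t z) hD2 (hasFDerivAt_prodMk_right (x t z) (u t z))).fderiv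
  have hsum : fderiv ℝ (fun y => L y (u t z)) (x t z) (xz t z v)
      + fderiv ℝ (fun ω' => L (x t z) ω') (u t z) (uz t z v) = Γz v := by
    rw [hpart1, hpart2, hΓeq]
    simp only [ContinuousLinearMap.comp_apply, ContinuousLinearMap.inl_apply,
      ContinuousLinearMap.inr_apply, ContinuousLinearMap.prod_apply]
    rw [← map_add]
    congr 1
    simp [Prod.ext_iff]
  rw [← hsum]
  exact hmain
end
end

section
/- Let v ∈ ℝⁿ with x_z(0,z̄)v = 0, set w⁰(t) := x_z(t,z̄)v and b⁰(t) := u_z(t,z̄)v, and let w : [0,T] → ℝⁿ be the solution of ẇ = f_x(x(t,z̄),u(t,z̄)) w, w(0) = −x_{zz}(0,z̄)(v,v). Assume the third-order z-derivatives x_{zzz}(t,z̄)(v,v,v) and x̃_{zzz}(t,z̄)(v,v,v) exist, are C¹ in t, and satisfy the thrice-differentiated variational equations (equations (2.21)–(2.22) of the paper, with the second-order relation x̃_{zz}(t,z̄)(v,v) = x_{zz}(t,z̄)(v,v) + w(t) in force). Then x̃_{zzz}(t,z̄)(v,v,v) = x_{zzz}(t,z̄)(v,v,v) + W(t) for all t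 ∈ [0,T], where W : [0,T] → ℝⁿ is the solution of the linear ODE Ẇ(t) = f_x(x(t,z̄),u(t,z̄)) W(t) + 3 f_{xx}(x(t,z̄),u(t,z̄))(w⁰(t) ⊗ w(t)) + 3 f_{xu}(x(t,z̄),u(t,z̄))(w(t) ⊗ b⁰(t)) with initial condition W(0) = −x_{zzz}(0,z̄)(v,v,v). -/
open scoped InnerProductSpace

noncomputable section

/-- `f_x(x,u)`. -/
def fxD {n m : ℕ} (f : E n → E m → E n) (x : E n) (u : E m) : E n →L[ℝ] E n :=
  fderiv ℝ (fun y => f y u) x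

/-- `f_u(x,u)`. -/
def fuD {n m : ℕ} (f : E n → E m → E n) (x : E n) (u : E m) : E m →L[ℝ] E n :=
  fderiv ℝ (fun ω => f x ω) u

/-- `f_{xx}(x,u)(a ⊗ b)`. -/
def fxxD {n m : ℕ} (f : E n → E m → E n) (x : E n) (u : E m) (a b : E n) : E n :=
  iteratedFDeriv ℝ 2 (fun y => f y u) x ![a, b]

/-- `f_{xu}(x,u)(a ⊗ c)`, with `a` an `x`-direction and `c` a `u`-direction. -/
def fxuD {n m : ℕ} (f : E n → E m → E n) (x : E n) (u : E m) (a : E n) (c : E m) : E n :=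
  fderiv ℝ (fun y => fderiv ℝ (fun ω => f y ω) u c) x a

/-- `f_{uu}(x,u)(c ⊗ d)`. -/
def fuuD {n m : ℕ} (f : E n → E m → E n) (x : E n) (u : E m) (c d : E m) : E n :=
  iteratedFDeriv ℝ 2 (fun ω => f x ω) u ![c, d]

/-- `f_{xxx}(x,u)(a ⊗ b ⊗ c)`. -/
def fxxxD {n m : ℕ} (f : E n → E m → E n) (x : E n) (u : E m) (a b c : E n) : E n :=
  iteratedFDeriv ℝ 3 (fun y => f y u) x ![a, b, c]

/-- `f_{xxu}(x,u)(a ⊗ b ⊗ c)`, with `a, b` `x`-directions and `c` a `u`-direction. -/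
def fxxuD {n m : ℕ} (f : E n → E m → E n) (x : E n) (u : E m) (a b : E n) (c : E m) : E n :=
  iteratedFDeriv ℝ 2 (fun y => fderiv ℝ (fun ω => f y ω) u c) x ![a, b]

/-- `f_{xuu}(x,u)(a ⊗ c ⊗ d)`, with `a` an `x`-direction and `c, d` `u`-directions. -/
def fxuuD {n m : ℕ} (f : E n → E m → E n) (x : E n) (u : E m) (a : E n) (c d : E m) : E n :=
  fderiv ℝ (fun y => iteratedFDeriv ℝ 2 (fun ω => f y ω) u ![c, d]) x a

/-- `f_{uuu}(x,u)(c ⊗ d ⊗ e)`. -/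
def fuuuD {n m : ℕ} (f : E n → E m → E n) (x : E n) (u : E m) (c d e : E m) : E n :=
  iteratedFDeriv ℝ 3 (fun ω => f x ω) u ![c, d, e]

lemma fxxD_add_right {n m : ℕ} (f : E n → E m → E n) (x : E n) (u : E m) (a b c : E n) :
    fxxD f x u a (b + c) = fxxD f x u a b + fxxD f x u a c := by
  have h : ∀ z : E n, ![a, z] = Function.update ![a, b] 1 z := by
    intro z
    funext i
    match i with
    | 0 => rw [Function.update_of_ne (by decide)]; rfl
    | 1 => rw [Function.update_self]; rfl
  have hm := (iteratedFDeriv ℝ 2 (fun y => f y u) x).map_update_add ![a, b] 1 b c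
  rw [← h (b + c), ← h b, ← h c] at hm
  simpa only [fxxD] using hm

lemma fxuD_add_left {n m : ℕ} (f : E n → E m → E n) (x : E n) (u : E m) (a b : E n) (c : E m) :
    fxuD f x u (a + b) c = fxuD f x u a c + fxuD f x u b c := by
  simp only [fxuD]
  exact (fderiv ℝ (fun y => fderiv ℝ (fun ω => f y ω) u c) x).map_add a b

lemma fxD_eq {n m : ℕ} (f0 : E n → E n) (fi : Fin m → E n → E n)
    (hf0 : ContDiff ℝ 3 f0) (hfi : ∀ i, ContDiff ℝ 3 (fi i))
    (f : E n → E m → E n) (hf : ∀ y ω, f y ω = f0 y + ∑ i, ω i • fi i y)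
    (y : E n) (ω : E m) :
    fxD f y ω = fderiv ℝ f0 y + ∑ i, ω i • fderiv ℝ (fi i) y := by
  have h1 : (fun z => f z ω) = fun z => f0 z + ∑ i, ω i • fi i z :=
    funext fun z => hf z ω
  have hd0 : DifferentiableAt ℝ f0 y := (hf0.differentiable (by norm_num)).differentiableAt
  have hdi : ∀ i : Fin m, DifferentiableAt ℝ (fun z => ω i • fi i z) y := fun i =>
    (((hfi i).differentiable (by norm_num)).differentiableAt).const_smul (ω i)
  have hds : DifferentiableAt ℝ (fun z => ∑ i, ω i • fi i z) y :=
    DifferentiableAt.fun_sum fun i _ => hdi i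
  rw [fxD, h1, fderiv_fun_add hd0 hds, fderiv_fun_sum fun i _ => hdi i]
  congr 1
  refine Finset.sum_congr rfl fun i _ => ?_
  rw [fderiv_fun_const_smul (((hfi i).differentiable (by norm_num)).differentiableAt) (ω i)]

/-- If `x_{zzz}(·,z̄)(v,v,v)` and `x̃_{zzz}(·,z̄)(v,v,v)` satisfy the
thrice-differentiated variational equations (2.21)–(2.22), with the second-order
relation `x̃_{zz} = x_{zz} + w` in force, then
`x̃_{zzz}(t,z̄)(v,v,v) = x_{zzz}(t,z̄)(v,v,v) + W(t)`, where `W` solves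
`Ẇ = f_x W + 3 f_{xx}(w⁰ ⊗ w) + 3 f_{xu}(w ⊗ b⁰)`, `W(0) = −x_{zzz}(0,z̄)(v,v,v)`. -/
theorem tilde_xzzz_eq_xzzz_add_W
    (n m : ℕ) (hn : 1 ≤ n) (hm : 1 ≤ m) (T : ℝ) (hT : 0 < T)
    (f0 : E n → E n) (fi : Fin m → E n → E n)
    (hf0 : ContDiff ℝ 3 f0) (hfi : ∀ i, ContDiff ℝ 3 (fi i))
    (f : E n → E m → E n)
    (hf : ∀ y ω, f y ω = f0 y + ∑ i, ω i • fi i y)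
    -- the reference trajectory `t ↦ (x(t,z̄), u(t,z̄))`
    (x : ℝ → E n) (u : ℝ → E m)
    (hx : Continuous x) (hu : Continuous u)
    -- `w⁰(t) = x_z(t,z̄)v` and `b⁰(t) = u_z(t,z̄)v`
    (w0 : ℝ → E n) (b0 : ℝ → E m)
    (hw0 : Continuous w0) (hb0 : Continuous b0)
    -- `X2 t = x_{zz}(t,z̄)(v,v)`, `U2 t = u_{zz}(t,z̄)(v,v)`
    (X2 : ℝ → E n) (U2 : ℝ → E m)
    -- `w` solves `ẇ = f_x w`, `w(0) = −x_{zz}(0,z̄)(v,v)`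
    (w : ℝ → E n)
    (hwinit : w 0 = -X2 0)
    (hwode : ∀ t ∈ Set.Icc (0 : ℝ) T, HasDerivAt w (fxD f (x t) (u t) (w t)) t)
    -- `X3 t = x_{zzz}(t,z̄)(v,v,v)`, `Xt3 t = x̃_{zzz}(t,z̄)(v,v,v)`,
    -- `U3 t = u_{zzz}(t,z̄)(v,v,v)`
    (X3 Xt3 : ℝ → E n) (U3 : ℝ → E m)
    -- equation (2.21), the thrice-differentiated variational equation for `x`
    (hX3 : ∀ t ∈ Set.Icc (0 : ℝ) T,
        HasDerivAt X3
          (fxxxD f (x t) (u t) (w0 t) (w0 t) (w0 t)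
            + (3 : ℝ) • fxxuD f (x t) (u t) (w0 t) (w0 t) (b0 t)
            + (3 : ℝ) • fxuuD f (x t) (u t) (w0 t) (b0 t) (b0 t)
            + fuuuD f (x t) (u t) (b0 t) (b0 t) (b0 t)
            + (3 : ℝ) • fxxD f (x t) (u t) (w0 t) (X2 t)
            + (3 : ℝ) • fuuD f (x t) (u t) (U2 t) (b0 t)
            + (3 : ℝ) • (fxuD f (x t) (u t) (X2 t) (b0 t)
                + fxuD f (x t) (u t) (w0 t) (U2 t))
            + fuD f (x t) (u t) (U3 t)
            + fxD f (x t) (u t) (X3 t)) t)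
    -- equation (2.22) for `x̃`, with `x̃_{zz}(t,z̄)(v,v) = X2 t + w t` in force
    (hXt3 : ∀ t ∈ Set.Icc (0 : ℝ) T,
        HasDerivAt Xt3
          (fxxxD f (x t) (u t) (w0 t) (w0 t) (w0 t)
            + (3 : ℝ) • fxxuD f (x t) (u t) (w0 t) (w0 t) (b0 t)
            + (3 : ℝ) • fxuuD f (x t) (u t) (w0 t) (b0 t) (b0 t)
            + fuuuD f (x t) (u t) (b0 t) (b0 t) (b0 t)
            + (3 : ℝ) • fxxD f (x t) (u t) (w0 t) (X2 t + w t)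
            + (3 : ℝ) • fuuD f (x t) (u t) (U2 t) (b0 t)
            + (3 : ℝ) • (fxuD f (x t) (u t) (X2 t + w t) (b0 t)
                + fxuD f (x t) (u t) (w0 t) (U2 t))
            + fuD f (x t) (u t) (U3 t)
            + fxD f (x t) (u t) (Xt3 t)) t)
    -- `x̃_{zzz}(0,z̄) = 0`, since `x̃(0,·)` is constant
    (hXt30 : Xt3 0 = 0)
    -- `W` solves the linear ODE (2.24) with initial data (2.25)
    (W : ℝ → E n)
    (hWinit : W 0 = -X3 0)
    (hWode : ∀ t ∈ Set.Icc (0 : ℝ) T,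
        HasDerivAt W
          (fxD f (x t) (u t) (W t)
            + (3 : ℝ) • fxxD f (x t) (u t) (w0 t) (w t)
            + (3 : ℝ) • fxuD f (x t) (u t) (w t) (b0 t)) t) :
    ∀ t ∈ Set.Icc (0 : ℝ) T, Xt3 t = X3 t + W t := by
  -- the difference
  set D : ℝ → E n := fun t => Xt3 t - (X3 t + W t) with hD
  -- the coefficient matrix
  set A : ℝ → E n →L[ℝ] E n := fun t => fxD f (x t) (u t) with hA
  -- continuity of A
  have hAcont : Continuous A := by
    have h1 : A = fun t => fderiv ℝ f0 (x t) + ∑ i, u t i • fderiv ℝ (fi i) (x t) :=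
      funext fun t => fxD_eq f0 fi hf0 hfi f hf (x t) (u t)
    rw [h1]
    refine Continuous.add (((hf0.continuous_fderiv (by norm_num))).comp hx) ?_
    refine continuous_finset_sum _ fun i _ => Continuous.fun_smul ?_ ?_
    · exact ((continuous_apply i).comp (PiLp.continuous_ofLp 2 _)).comp hu
    · exact ((hfi i).continuous_fderiv (by norm_num)).comp hx
  -- uniform bound on the norm of A on [0, T]
  obtain ⟨C, hC⟩ := isCompact_Icc.exists_bound_of_continuousOn
    (s := Set.Icc (0 : ℝ) T) (hAcont.continuousOn (f := A))
  set K : NNReal := ⟨max C 0, le_max_right _ _⟩ with hK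
  -- the (time-clamped) vector field
  set v : ℝ → E n → E n := fun t y => A ((Set.projIcc (0 : ℝ) T hT.le t : ℝ)) y with hv
  have hvlip : ∀ t, LipschitzWith K (v t) := by
    intro t
    refine ((A ((Set.projIcc (0 : ℝ) T hT.le t : ℝ))).lipschitz).weaken ?_
    have hmem : ((Set.projIcc (0 : ℝ) T hT.le t : ℝ)) ∈ Set.Icc (0 : ℝ) T :=
      (Set.projIcc (0 : ℝ) T hT.le t).2
    have := hC _ hmem
    rw [← NNReal.coe_le_coe]
    exact le_trans this (le_max_left _ _)
  -- D is a solution of the ODE y' = v t y on [0, T]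
  have hDderiv : ∀ t ∈ Set.Icc (0 : ℝ) T, HasDerivAt D (A t (D t)) t := by
    intro t ht
    have h := (hXt3 t ht).sub ((hX3 t ht).add (hWode t ht))
    refine h.congr_deriv ?_
    simp only [hD, hA, map_sub, map_add, fxxD_add_right, fxuD_add_left, smul_add]
    abel
  have hDcont : ContinuousOn D (Set.Icc (0 : ℝ) T) := fun t ht =>
    ((hDderiv t ht).continuousAt).continuousWithinAt
  have hDO : ∀ t ∈ Set.Ico (0 : ℝ) T, HasDerivWithinAt D (v t (D t)) (Set.Ici t) t := by
    intro t ht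
    have h1 : ((Set.projIcc (0 : ℝ) T hT.le t : ℝ)) = t :=
      congrArg Subtype.val (Set.projIcc_of_mem hT.le (Set.Ico_subset_Icc_self ht))
    rw [hv]
    simp only [h1]
    exact (hDderiv t (Set.Ico_subset_Icc_self ht)).hasDerivWithinAt
  -- the zero function is also a solution
  have hZO : ∀ t ∈ Set.Ico (0 : ℝ) T,
      HasDerivWithinAt (fun _ : ℝ => (0 : E n)) (v t 0) (Set.Ici t) t := by
    intro t ht
    have : v t (0 : E n) = 0 := by simp [hv]
    rw [this]
    exact (hasDerivWithinAt_const t _ 0)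
  have hinit : D 0 = (fun _ : ℝ => (0 : E n)) 0 := by
    simp [hD, hXt30, hWinit]
  have := ODE_solution_unique hvlip hDcont hDO
    (continuousOn_const) hZO hinit
  intro t ht
  have hDt : D t = 0 := this ht
  have : Xt3 t - (X3 t + W t) = 0 := hDt
  exact sub_eq_zero.mp this
end
end

section
/- Let n ≥ 1, T ≠ 0, let A be an invertible n×n real matrix, let v ∈ ℝⁿ with |v| = 1, and let b_1,…,b_n ∈ ℝⁿ be arbitrary. For i ∈ {1,…,n} let Λ_i = [[ −T·A·(v_i·I_n + e_i vᵀ) , b_i ], [ 0_{1×n} , −6T·v_i³ ]] be the (n+1)×(n+1) matrix in block form. Then there exists i ∈ {1,…,n} such that Λ_i is invertible. -/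
open Matrix

lemma det_aux (n : ℕ) (v : Fin n → ℝ) (i : Fin n) (hi : v i ≠ 0) :
    (v i • (1 : Matrix (Fin n) (Fin n) ℝ)
      + vecMulVec (Pi.single i 1) v).det = 2 * v i ^ n := by
  set u : Fin n → ℝ := (v i)⁻¹ • (Pi.single i 1 : Fin n → ℝ) with hu
  have h : (v i • (1 : Matrix (Fin n) (Fin n) ℝ) + vecMulVec (Pi.single i 1) v)
      = v i • (1 + vecMulVec u v) := by
    ext j k
    simp only [Matrix.add_apply, Matrix.smul_apply, vecMulVec_apply, Pi.smul_apply,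
      smul_eq_mul, hu]
    field_simp
  rw [h, det_smul, vecMulVec_eq (Fin 1), det_one_add_replicateCol_mul_replicateRow]
  have : v ⬝ᵥ u = 1 := by
    simp [hu, dotProduct, Pi.single_apply, mul_comm]
    field_simp
  rw [this]
  simp [Finset.card_univ]
  ring

/-- If `T ≠ 0`, `A` is invertible and `|v| = 1`, then for some index `i`
the block matrix `Λ_i = [[ −T·A·(v_i·I_n + e_i vᵀ) , b_i ], [ 0 , −6T·v_i³ ]]`
is invertible. -/
theorem exists_invertible_Lambda (n : ℕ) (hn : 1 ≤ n) (T : ℝ) (hT : T ≠ 0)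
    (A : Matrix (Fin n) (Fin n) ℝ) (hA : IsUnit A.det)
    (v : EuclideanSpace ℝ (Fin n)) (hv : ‖v‖ = 1)
    (b : Fin n → Fin n → ℝ) :
    ∃ i : Fin n, IsUnit (Matrix.fromBlocks
        (-(T • (A * (v i • (1 : Matrix (Fin n) (Fin n) ℝ)
            + Matrix.vecMulVec (Pi.single i 1) (fun j => v j)))))
        (Matrix.of fun j (_ : Fin 1) => b i j)
        (0 : Matrix (Fin 1) (Fin n) ℝ)
        (Matrix.of fun (_ : Fin 1) (_ : Fin 1) => -6 * T * v i ^ 3)) := by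
  -- choose a coordinate where v is nonzero
  have hv0 : v ≠ 0 := by
    intro h; rw [h, norm_zero] at hv; exact one_ne_zero hv.symm
  obtain ⟨i, hi⟩ : ∃ i, v i ≠ 0 := by
    by_contra h
    push_neg at h
    exact hv0 (by ext j; exact h j)
  refine ⟨i, ?_⟩
  rw [Matrix.isUnit_iff_isUnit_det, det_fromBlocks_zero₂₁]
  have hM : (v i • (1 : Matrix (Fin n) (Fin n) ℝ)
      + vecMulVec (Pi.single i 1) (fun j => v j)).det = 2 * v i ^ n :=
    det_aux n (fun j => v j) i hi
  rw [det_neg, det_smul, det_mul, hM]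
  have h11 : (Matrix.of fun (_ : Fin 1) (_ : Fin 1) => -6 * T * v i ^ 3).det
      = -6 * T * v i ^ 3 := det_fin_one _
  rw [h11]
  rw [isUnit_iff_ne_zero]
  have hAd : A.det ≠ 0 := hA.ne_zero
  positivity
end
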